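/- A surjective function f : X → Y is almost Q*g-closed if and only if for each subset S of Y and each regular open set U of X containing f⁻¹(S), there exists a Q*g-open set V of Y such that S ⊆ V and f⁻¹(V) ⊆ U. -/
import Mathlib


open Set Topology

def QStarClosed {X : Type*} [TopologicalSpace X] (A : Set X) : Prop :=
  IsClosed A ∧ interior A = ∅

def QStarOpen {X : Type*} [TopologicalSpace X] (A : Set X) : Prop :=
  QStarClosed Aᶜ

def GClosed {X : Type*} [TopologicalSpace X] (A : Set X) : Prop :=
  ∀ U : Set X, IsOpen U → A ⊆ U → closure A ⊆ U

def QStarGClosed {X : Type*} [TopologicalSpace X] (A : Set X) : Prop :=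
  ∀ U : Set X, QStarOpen U → A ⊆ U → closure A ⊆ U

def QStarGOpen {X : Type*} [TopologicalSpace X] (A : Set X) : Prop :=
  QStarGClosed Aᶜ

def QStarNormal (X : Type*) [TopologicalSpace X] : Prop :=
  ∀ A B : Set X, QStarClosed A → QStarClosed B → Disjoint A B →
    ∃ U V : Set X, IsOpen U ∧ IsOpen V ∧ A ⊆ U ∧ B ⊆ V ∧ Disjoint U V

def NormalSp (X : Type*) [TopologicalSpace X] : Prop :=
  ∀ A B : Set X, IsClosed A → IsClosed B → Disjoint A B →
    ∃ U V : Set X, IsOpen U ∧ IsOpen V ∧ A ⊆ U ∧ B ⊆ V ∧ Disjoint U V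

def GNormal (X : Type*) [TopologicalSpace X] : Prop :=
  ∀ A B : Set X, GClosed A → GClosed B → Disjoint A B →
    ∃ U V : Set X, IsOpen U ∧ IsOpen V ∧ A ⊆ U ∧ B ⊆ V ∧ Disjoint U V

theorem stmt18 {X Y : Type*} [TopologicalSpace X] [TopologicalSpace Y]
    (f : X → Y) (hf : Function.Surjective f) :
    (∀ F : Set X, F = closure (interior F) → QStarGClosed (f '' F)) ↔
      ∀ (S : Set Y) (U : Set X), U = interior (closure U) → f ⁻¹' S ⊆ U →
        ∃ V : Set Y, QStarGOpen V ∧ S ⊆ V ∧ f ⁻¹' V ⊆ U := by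
  constructor
  · intro h S U hU hSU
    refine ⟨(f '' Uᶜ)ᶜ, ?_, ?_, ?_⟩
    · unfold QStarGOpen
      rw [compl_compl]
      apply h
      rw [interior_compl, closure_compl, ← hU]
    · intro y hy hmem
      obtain ⟨x, hx, rfl⟩ := hmem
      exact hx (hSU hy)
    · intro x hx
      by_contra hxU
      exact hx ⟨x, hxU, rfl⟩
  · intro h F hF
    intro G hGopen hFG
    obtain ⟨V, hV, hGV, hfV⟩ := h Gᶜ Fᶜ
      (by rw [closure_compl, interior_compl, ← hF])
      (fun x hx => fun hxF => hx (hFG ⟨x, hxF, rfl⟩))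
    have h1 : f '' F ⊆ Vᶜ := by
      rintro y ⟨x, hx, rfl⟩ hyV
      exact hfV hyV hx
    have h2 : Vᶜ ⊆ G := fun y hy => by
      by_contra hyG
      exact hy (hGV hyG)
    calc closure (f '' F) ⊆ closure Vᶜ := closure_mono h1
      _ ⊆ G := hV G hGopen h2
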